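/- If (k₀, k₁, …, kₙ; μ₀, μ₁, …, μₙ) is a set of U(n) caloron boundary data (i.e. it satisfies conditions (i)–(iv)), then its image (k̃₀, …, k̃ₙ; μ₀, μ̃₁, …, μ̃ₙ) under the rotation map ρ is again a set of U(n) caloron boundary data; that is, it satisfies (i) k̃₁ + ⋯ + k̃ₙ = 0, (ii) μ̃ₙ < μ̃ₙ₋₁ < ⋯ < μ̃₁, (iii) μ₀ − (μ̃₁ − μ̃ₙ) > 0, and (iv) k̃₀ + k̃₁ + ⋯ + k̃_p ≥ 0 for every p = 0, 1, …, n. -/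
import Mathlib

open Finset

/-- The rotated charges: `k̃₀ = k₀ + k₁`, `k̃ⱼ = k_{j+1}` for `1 ≤ j ≤ n-1`, `k̃ₙ = k₁`. -/
def rotK (n : ℕ) (k : ℕ → ℤ) : ℕ → ℤ :=
  fun j => if j = 0 then k 0 + k 1 else if j = n then k 1 else k (j + 1)

/-- The rotated masses: `μ̃ⱼ = μ₀/n + μ_{j+1}` for `1 ≤ j ≤ n-1`, `μ̃ₙ = μ₁ - (n-1)μ₀/n`;
`μ₀` is unchanged. -/
noncomputable def rotMu (n : ℕ) (μ₀ : ℝ) (μ : ℕ → ℝ) : ℕ → ℝ :=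
  fun j => if j = n then μ 1 - ((n : ℝ) - 1) * μ₀ / n else μ₀ / n + μ (j + 1)

lemma shift_sum (f : ℕ → ℤ) (a b : ℕ) :
    ∑ j ∈ Icc (a+1) (b+1), f j = ∑ j ∈ Icc a b, f (j+1) := by
  rw [← Finset.map_add_right_Icc, Finset.sum_map]; rfl

lemma peel_bot (f : ℕ → ℤ) (a b : ℕ) (h : a ≤ b) :
    ∑ j ∈ Icc a b, f j = f a + ∑ j ∈ Icc (a+1) b, f j := by
  rw [Finset.Icc_eq_cons_Ioc h, Finset.sum_cons, Finset.Icc_add_one_left_eq_Ioc]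

theorem rotation_preserves_caloron_boundary_data
    (n : ℕ) (hn : 2 ≤ n) (k : ℕ → ℤ) (μ₀ : ℝ) (μ : ℕ → ℝ)
    (h1 : ∑ j ∈ Icc 1 n, k j = 0)
    (h2 : ∀ j, 1 ≤ j → j < n → μ (j + 1) < μ j)
    (h3 : 0 < μ₀ - (μ 1 - μ n))
    (h4 : ∀ p, p ≤ n → 0 ≤ ∑ j ∈ Icc 0 p, k j) :
    (∑ j ∈ Icc 1 n, rotK n k j = 0) ∧
    (∀ j, 1 ≤ j → j < n → rotMu n μ₀ μ (j + 1) < rotMu n μ₀ μ j) ∧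
    (0 < μ₀ - (rotMu n μ₀ μ 1 - rotMu n μ₀ μ n)) ∧
    (∀ p, p ≤ n → 0 ≤ ∑ j ∈ Icc 0 p, rotK n k j) := by
  obtain ⟨m, rfl⟩ : ∃ m, n = m + 1 := ⟨n - 1, by omega⟩
  have hm : 1 ≤ m := by omega
  have hnR : ((m : ℝ) + 1) ≠ 0 := by positivity
  -- middle part of the rotated sum
  have hmid : ∀ p, p ≤ m → ∑ j ∈ Icc 1 p, rotK (m+1) k j = ∑ j ∈ Icc 2 (p+1), k j := by
    intro p hp
    rw [shift_sum]
    apply Finset.sum_congr rfl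
    intro j hj
    simp only [Finset.mem_Icc] at hj
    simp only [rotK]
    rw [if_neg (by omega), if_neg (by omega)]
  -- (i)
  have part1 : ∑ j ∈ Icc 1 (m+1), rotK (m+1) k j = 0 := by
    rw [Finset.sum_Icc_succ_top (by omega), hmid m le_rfl,
      show rotK (m+1) k (m+1) = k 1 by simp [rotK]]
    rw [peel_bot k 1 (m+1) (by omega)] at h1
    linarith [h1]
  refine ⟨part1, ?_, ?_, ?_⟩
  · -- (ii)
    intro j hj hjn
    simp only [rotMu]
    by_cases hje : j + 1 = m + 1
    · have hj' : m = j := by omega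
      subst hj'
      rw [if_pos hje, if_neg (by omega)]
      have hμ : ((m : ℝ) + 1 - 1) * μ₀ / ((m:ℝ)+1) + μ₀ / ((m:ℝ)+1) = μ₀ := by
        field_simp
        ring
      push_cast
      linarith [h3]
    · rw [if_neg hje, if_neg (by omega)]
      have := h2 (j+1) (by omega) (by omega)
      linarith
  · -- (iii)
    have e1 : rotMu (m+1) μ₀ μ 1 = μ₀ / ((m:ℝ)+1) + μ 2 := by
      simp only [rotMu]
      rw [if_neg (by omega)]
      push_cast; ring
    have e2 : rotMu (m+1) μ₀ μ (m+1) = μ 1 - ((m:ℝ) + 1 - 1) * μ₀ / ((m:ℝ)+1) := by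
      simp only [rotMu, if_pos rfl]
      push_cast; ring
    rw [e1, e2]
    have hμ : ((m : ℝ) + 1 - 1) * μ₀ / ((m:ℝ)+1) + μ₀ / ((m:ℝ)+1) = μ₀ := by
      field_simp
      ring
    have := h2 1 le_rfl (by omega)
    norm_num at this
    linarith
  · -- (iv)
    intro p hp
    rcases Nat.lt_or_ge p (m+1) with hlt | hge
    · have hp' : p ≤ m := by omega
      have key : ∑ j ∈ Icc 0 p, rotK (m+1) k j = ∑ j ∈ Icc 0 (p+1), k j := by
        rw [peel_bot _ 0 p (by omega), hmid p hp',
          show rotK (m+1) k 0 = k 0 + k 1 by simp [rotK],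
          peel_bot k 0 (p+1) (by omega), peel_bot k 1 (p+1) (by omega)]
        ring
      rw [key]
      exact h4 (p+1) (by omega)
    · have hpe : p = m + 1 := by omega
      subst hpe
      rw [peel_bot _ 0 (m+1) (by omega), part1,
        show rotK (m+1) k 0 = k 0 + k 1 by simp [rotK]]
      have := h4 1 (by omega)
      rw [show Icc 0 1 = ({0,1} : Finset ℕ) from rfl] at this
      simp at this
      linarith
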